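/- Let a < b be real numbers, m ≥ 1 an integer, and f₁,…,f_m, g₁,…,g_m : [a,b] → ℂ continuous functions. Define the degenerate kernel K(p,q) = ∑_{k=1}^m f_k(p) g_k(q) and the m×m matrix M with entries M_{jk} = ∫_a^b f_j(p) g_k(p) dp. Then for every integer n > m the n-fold integral ∫_{[a,b]^n} det_n[ K(p_i, p_j) ]_{i,j=1}^n dp₁…dp_n vanishes, and ∑_{n=0}^∞ (1/n!) ∫_{[a,b]^n} det_n[ K(p_i, p_j) ] dp₁…dp_n = det( I_m + M ), where the n = 0 term of the series is 1 and I_m is the m×m identity matrix. -/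

import Mathlib

open MeasureTheory Finset

private lemma restrict_pi_eq (n : ℕ) (a b : ℝ) :
    (volume : Measure (Fin n → ℝ)).restrict (Set.univ.pi fun _ => Set.Icc a b) =
      Measure.pi (fun _ : Fin n => volume.restrict (Set.Icc a b)) := by
  refine Eq.symm (Measure.pi_eq fun s hs => ?_)
  rw [Measure.restrict_apply (MeasurableSet.univ_pi hs), ← Set.pi_inter_distrib,
    volume_pi_pi]
  simp_rw [Measure.restrict_apply (hs _)]

/-- The submatrix of `M` given by the rows and columns in a finset `t`. -/
noncomputable def Mt {m : ℕ} (M : Matrix (Fin m) (Fin m) ℂ) (t : Finset (Fin m)) :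
    Matrix ↥t ↥t ℂ := M.submatrix (fun i => ↑i) (fun i => ↑i)

private lemma det_submatrix_noninj {m n : ℕ} (M : Matrix (Fin m) (Fin m) ℂ)
    {c : Fin n → Fin m} (h : ¬ Function.Injective c) :
    Matrix.det (M.submatrix c c) = 0 := by
  rw [Function.not_injective_iff] at h
  obtain ⟨x, y, hxy, hne⟩ := h
  refine Matrix.det_zero_of_row_eq hne ?_
  funext j
  simp [Matrix.submatrix_apply, hxy]

private lemma keyA (a b : ℝ) (hab : a < b) (m : ℕ)
    (f g : Fin m → ℝ → ℂ)
    (hf : ∀ k, ContinuousOn (f k) (Set.Icc a b))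
    (hg : ∀ k, ContinuousOn (g k) (Set.Icc a b))
    (K : ℝ → ℝ → ℂ) (hK : ∀ p q, K p q = ∑ k : Fin m, f k p * g k q)
    (M : Matrix (Fin m) (Fin m) ℂ)
    (hM : ∀ j k : Fin m, M j k = ∫ p in a..b, f j p * g k p) (n : ℕ) :
    (∫ p : Fin n → ℝ in Set.univ.pi (fun _ => Set.Icc a b),
        Matrix.det (Matrix.of fun i j : Fin n => K (p i) (p j))) =
      ∑ c : Fin n → Fin m, Matrix.det (M.submatrix c c) := by
  set μ : Measure ℝ := volume.restrict (Set.Icc a b) with hμ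
  have hint : ∀ j k : Fin m, Integrable (fun x => f j x * g k x) μ := fun j k =>
    ((hf j).mul (hg k)).integrableOn_compact isCompact_Icc
  have hMμ : ∀ j k : Fin m, M j k = ∫ x, f j x * g k x ∂μ := by
    intro j k
    rw [hM j k, intervalIntegral.integral_of_le hab.le, ← integral_Icc_eq_integral_Ioc]
  -- pointwise expansion of the determinant
  have hpt : ∀ p : Fin n → ℝ,
      Matrix.det (Matrix.of fun i j : Fin n => K (p i) (p j)) =
        ∑ σ : Equiv.Perm (Fin n), ∑ c : Fin n → Fin m,
          ((Equiv.Perm.sign σ : ℤ) : ℂ) *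
            ∏ i, (f (c (σ⁻¹ i)) (p i) * g (c i) (p i)) := by
    intro p
    rw [Matrix.det_apply']
    refine Finset.sum_congr rfl fun σ _ => ?_
    simp only [Matrix.of_apply, hK]
    rw [Finset.prod_univ_sum, Finset.mul_sum]
    refine Finset.sum_congr rfl fun c _ => ?_
    congr 1
    rw [Finset.prod_mul_distrib, Finset.prod_mul_distrib]
    congr 1
    have := Equiv.prod_comp σ (fun j => f (c (σ⁻¹ j)) (p j))
    simp only [Equiv.Perm.inv_def, Equiv.symm_apply_apply] at this
    exact this
  -- integrability of each term
  have hterm : ∀ (σ : Equiv.Perm (Fin n)) (c : Fin n → Fin m),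
      Integrable (fun p : Fin n → ℝ =>
          ((Equiv.Perm.sign σ : ℤ) : ℂ) * ∏ i, (f (c (σ⁻¹ i)) (p i) * g (c i) (p i)))
        (Measure.pi fun _ : Fin n => μ) := by
    intro σ c
    refine Integrable.const_mul ?_ _
    exact Integrable.fintype_prod
      (f := fun i x => f (c (σ⁻¹ i)) x * g (c i) x)
      (μ := fun _ => μ)
      (fun i => hint _ _)
  calc (∫ p : Fin n → ℝ in Set.univ.pi (fun _ => Set.Icc a b),
        Matrix.det (Matrix.of fun i j : Fin n => K (p i) (p j)))
      = ∫ p : Fin n → ℝ, (∑ σ : Equiv.Perm (Fin n), ∑ c : Fin n → Fin m,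
          ((Equiv.Perm.sign σ : ℤ) : ℂ) *
            ∏ i, (f (c (σ⁻¹ i)) (p i) * g (c i) (p i)))
          ∂(Measure.pi fun _ : Fin n => μ) := by
        rw [← restrict_pi_eq n a b]
        exact integral_congr_ae (Filter.Eventually.of_forall hpt)
    _ = ∑ σ : Equiv.Perm (Fin n), ∑ c : Fin n → Fin m,
          ((Equiv.Perm.sign σ : ℤ) : ℂ) * ∏ i, M (c (σ⁻¹ i)) (c i) := by
        rw [integral_finset_sum _ (fun σ _ => integrable_finset_sum _ (fun c _ => hterm σ c))]
        refine Finset.sum_congr rfl fun σ _ => ?_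
        rw [integral_finset_sum _ (fun c _ => hterm σ c)]
        refine Finset.sum_congr rfl fun c _ => ?_
        rw [integral_const_mul]
        congr 1
        have hprod := MeasureTheory.integral_fintype_prod_eq_prod (E := fun _ => ℝ)
          (fun i x => f (c (σ⁻¹ i)) x * g (c i) x)
          (μ := fun _ => μ)
        exact hprod.trans (Finset.prod_congr rfl fun i _ => (hMμ _ _).symm)
    _ = ∑ c : Fin n → Fin m, Matrix.det (M.submatrix c c) := by
        rw [Finset.sum_comm]
        refine Finset.sum_congr rfl fun c _ => ?_
        rw [Matrix.det_apply']
        rw [← Equiv.sum_comp (Equiv.inv (Equiv.Perm (Fin n)))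
          (fun σ => ((Equiv.Perm.sign σ : ℤ) : ℂ) * ∏ i, M.submatrix c c (σ i) i)]
        refine Finset.sum_congr rfl fun σ _ => ?_
        simp only [Equiv.inv_apply, Equiv.Perm.sign_inv, Matrix.submatrix_apply]

private lemma L4 (m : ℕ) (M : Matrix (Fin m) (Fin m) ℂ) :
    Matrix.det (1 + M) = ∑ t : Finset (Fin m), Matrix.det (Mt M t) := by
  classical
  rw [Matrix.det_apply']
  have expand : ∀ σ : Equiv.Perm (Fin m),
      ∏ j, (1 + M) (σ j) j =
        ∑ t ∈ (univ : Finset (Fin m)).powerset,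
          (∏ j ∈ t, M (σ j) j) * ∏ j ∈ univ \ t, (1 : Matrix (Fin m) (Fin m) ℂ) (σ j) j := by
    intro σ
    rw [← Finset.prod_add]
    refine Finset.prod_congr rfl fun j _ => ?_
    simp [Matrix.add_apply, add_comm]
  simp_rw [expand, Finset.mul_sum, Finset.powerset_univ]
  rw [Finset.sum_comm]
  refine Finset.sum_congr rfl fun t _ => ?_
  -- restrict to permutations fixing the complement of t
  have hfilter :
      ∑ σ : Equiv.Perm (Fin m),
          ((Equiv.Perm.sign σ : ℤ) : ℂ) *
            ((∏ j ∈ t, M (σ j) j) * ∏ j ∈ univ \ t, (1 : Matrix (Fin m) (Fin m) ℂ) (σ j) j) =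
        ∑ σ ∈ (univ : Finset (Equiv.Perm (Fin m))).filter (fun σ => ∀ j ∉ t, σ j = j),
          ((Equiv.Perm.sign σ : ℤ) : ℂ) * ∏ j ∈ t, M (σ j) j := by
    rw [Finset.sum_filter]
    refine Finset.sum_congr rfl fun σ _ => ?_
    by_cases hP : ∀ j ∉ t, σ j = j
    · rw [if_pos hP]
      have : ∏ j ∈ univ \ t, (1 : Matrix (Fin m) (Fin m) ℂ) (σ j) j = 1 := by
        refine Finset.prod_eq_one fun j hj => ?_
        rw [hP j (by simpa using hj)]
        exact Matrix.one_apply_eq j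
      rw [this, mul_one]
    · rw [if_neg hP]
      push_neg at hP
      obtain ⟨j, hj, hσj⟩ := hP
      have : ∏ j ∈ univ \ t, (1 : Matrix (Fin m) (Fin m) ℂ) (σ j) j = 0 :=
        Finset.prod_eq_zero (by simpa using hj) (Matrix.one_apply_ne hσj)
      rw [this, mul_zero, mul_zero]
  rw [hfilter]
  -- bijection with permutations of ↥t
  rw [Matrix.det_apply']
  have hiff : ∀ σ : Equiv.Perm (Fin m), (∀ j ∉ t, σ j = j) →
      ∀ x : Fin m, x ∈ t ↔ σ x ∈ t := by
    intro σ hσ x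
    constructor
    · intro hx
      by_contra hσx
      have h2 : σ (σ x) = σ x := hσ _ hσx
      have h3 : σ x = x := σ.injective h2
      exact hσx (h3.symm ▸ hx)
    · intro hσx
      by_contra hx
      rw [hσ x hx] at hσx
      exact hx hσx
  refine Finset.sum_bij'
    (i := fun σ hσ => Equiv.Perm.subtypePerm σ (fun x => (hiff σ (Finset.mem_filter.mp hσ).2 x).symm))
    (j := fun τ _ => Equiv.Perm.ofSubtype τ) ?_ ?_ ?_ ?_ ?_
  · intro σ hσ; exact Finset.mem_univ _
  · intro τ _
    refine Finset.mem_filter.mpr ⟨Finset.mem_univ _, fun j hj => ?_⟩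
    exact Equiv.Perm.ofSubtype_apply_of_not_mem τ hj
  · intro σ hσ
    exact Equiv.Perm.ofSubtype_subtypePerm _ fun x hx =>
      by_contra fun hxt => hx ((Finset.mem_filter.mp hσ).2 x hxt)
  · intro τ _
    exact Equiv.Perm.subtypePerm_ofSubtype τ
  · intro σ hσ
    have h2 : ∀ x, σ x ≠ x → x ∈ t := fun x hx =>
      by_contra fun hxt => hx ((Finset.mem_filter.mp hσ).2 x hxt)
    have hsign : (@Equiv.Perm.sign ↥t (fun a b => a.instDecidableEq b) (Finset.Subtype.fintype t))
        (Equiv.Perm.subtypePerm σ (fun x => (hiff σ (Finset.mem_filter.mp hσ).2 x).symm)) = Equiv.Perm.sign σ := by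
      rw [Subsingleton.elim (Finset.Subtype.fintype t) (Subtype.fintype _)]
      exact Equiv.Perm.sign_subtypePerm σ _ h2
    rw [hsign]
    congr 1
    rw [← Finset.prod_coe_sort t (fun j => M (σ j) j)]
    rfl

private lemma L2sum (m n : ℕ) (M : Matrix (Fin m) (Fin m) ℂ) :
    ∑ c : Fin n → Fin m, Matrix.det (M.submatrix c c) =
      ∑ t ∈ (univ : Finset (Finset (Fin m))).filter (fun t => t.card = n),
        (n.factorial : ℂ) * Matrix.det (Mt M t) := by
  classical
  rw [← Finset.sum_fiberwise univ (fun c : Fin n → Fin m => Finset.image c univ)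
    (fun c => Matrix.det (M.submatrix c c))]
  rw [Finset.sum_filter]
  refine Finset.sum_congr rfl fun t _ => ?_
  by_cases hcard : t.card = n
  · rw [if_pos hcard]
    have hmem : ∀ c : Fin n → Fin m, Finset.image c univ = t → ∀ i, c i ∈ t := by
      intro c hc i; rw [← hc]; exact Finset.mem_image_of_mem c (Finset.mem_univ i)
    have hinj : ∀ c : Fin n → Fin m, Finset.image c univ = t → Function.Injective c := by
      intro c hc
      have h1 : (Finset.image c univ).card = (univ : Finset (Fin n)).card := by
        rw [hc, hcard, Finset.card_univ, Fintype.card_fin]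
      have h2 := Finset.card_image_iff.mp h1
      intro x y hxy
      exact h2 (Finset.mem_coe.mpr (Finset.mem_univ x)) (Finset.mem_coe.mpr (Finset.mem_univ y)) hxy
    have hbij : ∀ (c : Fin n → Fin m) (hc : Finset.image c univ = t),
        Function.Bijective (fun i => (⟨c i, hmem c hc i⟩ : ↥t)) := by
      intro c hc
      rw [Fintype.bijective_iff_injective_and_card]
      constructor
      · intro x y hxy
        exact hinj c hc (congr_arg Subtype.val hxy)
      · simp [hcard]
    have step : ∑ c ∈ Finset.filter (fun c : Fin n → Fin m => Finset.image c univ = t) univ,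
        Matrix.det (M.submatrix c c) = ∑ e : Fin n ≃ ↥t, Matrix.det ((Mt M t).submatrix e e) := by
      refine Finset.sum_bij'
        (i := fun c hc => Equiv.ofBijective _ (hbij c (Finset.mem_filter.mp hc).2))
        (j := fun e _ => fun i => ((e i : ↥t) : Fin m)) ?_ ?_ ?_ ?_ ?_
      · intro c hc; exact Finset.mem_univ _
      · intro e _
        refine Finset.mem_filter.mpr ⟨Finset.mem_univ _, ?_⟩
        ext x
        simp only [Finset.mem_image, Finset.mem_univ, true_and]
        constructor
        · rintro ⟨i, rfl⟩; exact (e i).2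
        · intro hx; exact ⟨e.symm ⟨x, hx⟩, by simp⟩
      · intro c hc; rfl
      · intro e _; ext i; rfl
      · intro c hc
        congr 1
    rw [step]
    have : ∀ e : Fin n ≃ ↥t, Matrix.det ((Mt M t).submatrix e e) = Matrix.det (Mt M t) :=
      fun e => Matrix.det_submatrix_equiv_self e _
    rw [Finset.sum_congr rfl (fun e _ => this e), Finset.sum_const, Finset.card_univ,
      Fintype.card_equiv (Fintype.equivOfCardEq (by simp [hcard])), nsmul_eq_mul,
      Fintype.card_fin]
  · rw [if_neg hcard]
    refine Finset.sum_eq_zero fun c hc => ?_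
    have himg := (Finset.mem_filter.mp hc).2
    refine det_submatrix_noninj M fun h => ?_
    apply hcard
    rw [← himg, Finset.card_image_of_injective _ h, Finset.card_univ, Fintype.card_fin]

private lemma comb (m : ℕ) (M : Matrix (Fin m) (Fin m) ℂ) :
    ∑ n ∈ Finset.range (m + 1), (1 / (n.factorial : ℂ)) *
        ∑ c : Fin n → Fin m, Matrix.det (M.submatrix c c) = Matrix.det (1 + M) := by
  classical
  rw [L4]
  calc ∑ n ∈ Finset.range (m + 1), (1 / (n.factorial : ℂ)) *
        ∑ c : Fin n → Fin m, Matrix.det (M.submatrix c c)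
      = ∑ n ∈ Finset.range (m + 1),
          ∑ t ∈ (univ : Finset (Finset (Fin m))).filter (fun t => t.card = n),
            Matrix.det (Mt M t) := by
        refine Finset.sum_congr rfl fun n _ => ?_
        rw [L2sum, Finset.mul_sum]
        refine Finset.sum_congr rfl fun t _ => ?_
        rw [← mul_assoc, one_div, inv_mul_cancel₀ (Nat.cast_ne_zero.mpr n.factorial_ne_zero),
          one_mul]
    _ = ∑ t : Finset (Fin m), Matrix.det (Mt M t) := by
        refine Finset.sum_fiberwise_of_maps_to (fun t _ => Finset.mem_range.mpr ?_) _
        exact Nat.lt_succ_of_le (by simpa using Finset.card_le_univ t)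

/-- Fredholm determinant of a degenerate kernel `K(p,q) = ∑_{k=1}^m f_k(p) g_k(q)` on `[a,b]`:
the terms of the Fredholm series with `n > m` vanish, and the series equals the finite
determinant `det(I_m + M)` with `M_{jk} = ∫_a^b f_j g_k`. -/
theorem stmt11 (a b : ℝ) (hab : a < b) (m : ℕ) (hm : 1 ≤ m)
    (f g : Fin m → ℝ → ℂ)
    (hf : ∀ k, ContinuousOn (f k) (Set.Icc a b))
    (hg : ∀ k, ContinuousOn (g k) (Set.Icc a b))
    (K : ℝ → ℝ → ℂ) (hK : ∀ p q, K p q = ∑ k : Fin m, f k p * g k q)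
    (M : Matrix (Fin m) (Fin m) ℂ)
    (hM : ∀ j k : Fin m, M j k = ∫ p in a..b, f j p * g k p) :
    (∀ n : ℕ, m < n →
      ∫ p : Fin n → ℝ in Set.univ.pi (fun _ => Set.Icc a b),
        Matrix.det (Matrix.of fun i j : Fin n => K (p i) (p j)) = 0) ∧
    ∑' n : ℕ, (1 / (n.factorial : ℂ)) *
        ∫ p : Fin n → ℝ in Set.univ.pi (fun _ => Set.Icc a b),
          Matrix.det (Matrix.of fun i j : Fin n => K (p i) (p j)) =
      Matrix.det (1 + M) := by
  have key := keyA a b hab m f g hf hg K hK M hM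
  have part1 : ∀ n : ℕ, m < n →
      (∫ p : Fin n → ℝ in Set.univ.pi (fun _ => Set.Icc a b),
        Matrix.det (Matrix.of fun i j : Fin n => K (p i) (p j))) = 0 := by
    intro n hn
    rw [key n]
    refine Finset.sum_eq_zero fun c _ => ?_
    refine det_submatrix_noninj M fun h => ?_
    have := Fintype.card_le_of_injective c h
    simp only [Fintype.card_fin] at this
    omega
  refine ⟨part1, ?_⟩
  rw [tsum_eq_sum (s := Finset.range (m + 1)) (fun n hn => by
    rw [part1 n (by simpa using hn), mul_zero])]
  rw [← comb m M]
  exact Finset.sum_congr rfl fun n _ => by rw [key n]
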